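/- Let S be a Hausdorff topological semigroup whose square S × S is countably compact. Then S contains no isomorphic copy of the bicyclic semigroup: there is no injective semigroup homomorphism from the bicyclic monoid C(p,q) into S. -/

import Mathlib

/-- The multiplication of the bicyclic monoid `C(p,q)` (generated by `p`, `q`
with `q * p = 1`), in the normal form `(a, b) ↔ p^a * q^b`:
`p^a q^b * p^c q^d = p^(a + c - min b c) * q^(b + d - min b c)`. -/
def bicyclicMul (u v : ℕ × ℕ) : ℕ × ℕ :=
  (u.1 + v.1 - min u.2 v.1, u.2 + v.2 - min u.2 v.1)

/-- A Hausdorff topological semigroup `S` whose square `S × S` is countably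
compact contains no isomorphic copy of the bicyclic monoid: there is no
injective semigroup homomorphism from `C(p,q)` into `S`. -/
theorem no_bicyclic_of_countablyCompact_square {S : Type*} [Semigroup S]
    [TopologicalSpace S] [T2Space S] [ContinuousMul S]
    (hcc : ∀ u : ℕ → S × S, ∃ a : S × S, MapClusterPt a Filter.atTop u) :
    ¬ ∃ φ : ℕ × ℕ → S, Function.Injective φ ∧
        ∀ u v : ℕ × ℕ, φ (bicyclicMul u v) = φ u * φ v := by
  rintro ⟨φ, hinj, hhom⟩
  -- the sequence (q^n, p^n) in S × S and a cluster point (a, b) of it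
  set u : ℕ → S × S := fun n => (φ (0, n), φ (n, 0)) with hu
  obtain ⟨⟨a, b⟩, hab⟩ := hcc u
  -- a * b = φ (0,0)
  have hmulC : ContinuousAt (fun p : S × S => p.1 * p.2) (a, b) :=
    continuous_mul.continuousAt
  have hmul : MapClusterPt (a * b) Filter.atTop
      ((fun p : S × S => p.1 * p.2) ∘ u) :=
    hab.continuousAt_comp hmulC
  have hconst : ∀ n : ℕ, (fun p : S × S => p.1 * p.2) (u n) = φ (0, 0) := by
    intro n
    have h := (hhom (0, n) (n, 0)).symm
    simpa [bicyclicMul, u] using h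
  have habe : a * b = φ (0, 0) := by
    have h : MapClusterPt (a * b) Filter.atTop (fun _ : ℕ => φ (0, 0)) := by
      have : ((fun p : S × S => p.1 * p.2) ∘ u) = fun _ : ℕ => φ (0, 0) := by
        funext n; exact hconst n
      rwa [this] at hmul
    have h2 := h.clusterPt
    rw [Filter.map_const] at h2
    have h3 : (a * b) ∈ closure ({φ (0, 0)} : Set S) := by
      rw [mem_closure_iff_clusterPt]
      simpa [Filter.principal_singleton] using h2
    simpa [closure_singleton] using h3
  -- the open set W = {x | φ(1,1) * x ≠ x} contains a * b = φ(0,0)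
  set W : Set S := {x | φ (1, 1) * x ≠ x} with hW
  have hWopen : IsOpen W := by
    have : IsClosed {x : S | φ (1, 1) * x = x} :=
      isClosed_eq (continuous_const.mul continuous_id) continuous_id
    exact this.isOpen_compl
  have heW : a * b ∈ W := by
    rw [habe, hW]
    intro h
    have h2 : φ (bicyclicMul (1, 1) (0, 0)) = φ (1, 1) * φ (0, 0) := hhom _ _
    have h3 : bicyclicMul (1, 1) (0, 0) = (1, 1) := by
      simp [bicyclicMul]
    rw [h3] at h2
    have : φ (1, 1) = φ (0, 0) := by rw [h2, h]
    exact absurd (hinj this) (by simp)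
  -- neighborhoods U of a, V of b with U * V ⊆ W
  have hWnhds : W ∈ nhds (a * b) := hWopen.mem_nhds heW
  have hpre : (fun p : S × S => p.1 * p.2) ⁻¹' W ∈ nhds (a, b) := hmulC hWnhds
  obtain ⟨U, hU, V, hV, hUV⟩ := mem_nhds_prod_iff.mp hpre
  -- cluster point: frequently (φ(0,n), φ(n,0)) ∈ U × V
  have hfreq : ∃ᶠ n in Filter.atTop, u n ∈ U ×ˢ V := by
    have := mapClusterPt_iff_frequently.mp hab (U ×ˢ V) (prod_mem_nhds hU hV)
    simpa using this
  obtain ⟨n, -, hn⟩ := (Filter.frequently_atTop.mp hfreq) 0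
  obtain ⟨m, hmn, hm⟩ := (Filter.frequently_atTop.mp hfreq) (n + 1)
  -- φ(0,n) * φ(m,0) = φ(m-n, 0) lies in W
  have hmem : (φ (0, n), φ (m, 0)) ∈ U ×ˢ V := ⟨hn.1, hm.2⟩
  have hinW : φ (0, n) * φ (m, 0) ∈ W := hUV hmem
  have hprod : φ (0, n) * φ (m, 0) = φ (m - n, 0) := by
    have h := (hhom (0, n) (m, 0)).symm
    have h2 : bicyclicMul (0, n) (m, 0) = (m - n, 0) := by
      have : min n m = n := min_eq_left (by omega)
      simp [bicyclicMul, this]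
    rw [h2] at h
    exact h
  -- but φ(1,1) * φ(k,0) = φ(k,0) for k ≥ 1, so φ(m-n,0) ∉ W
  have hfix : φ (1, 1) * φ (m - n, 0) = φ (m - n, 0) := by
    have h := (hhom (1, 1) (m - n, 0)).symm
    have h2 : bicyclicMul (1, 1) (m - n, 0) = (m - n, 0) := by
      have h1 : min 1 (m - n) = 1 := min_eq_left (by omega)
      simp [bicyclicMul, h1]
    rw [h2] at h
    exact h
  rw [hprod] at hinW
  exact hinW hfix
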